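/- Let F(y,v) = ((Υ₀(y)(1−y) − v)y, (b(Υ₀(y)(1−y) − v) + Γ₀(y)(2 − (6+a)(1−y)))v) be a planar vector field with Υ₀, Γ₀ ∈ C¹ and b > 0. Then with φ(y,v) = 1/(y^{1+b} v) on (0,1)×(0,∞), one has ∇·(φF)(y,v) = −φ(y,v)·((bΥ₀(y) − y Υ₀'(y))(1−y) + yΥ₀(y)). In particular, if (bΥ₀(y) − yΥ₀'(y))(1−y) + yΥ₀(y) > 0 for all y ∈ (0,1), then ∇·(φF) < 0 on (0,1)×(0,∞). -/

import Mathlib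

open Real

/-- First component of the planar vector field. -/
noncomputable def planarF1 (Υ₀ : ℝ → ℝ) (y v : ℝ) : ℝ :=
  (Υ₀ y * (1 - y) - v) * y

/-- Second component of the planar vector field. -/
noncomputable def planarF2 (Υ₀ Γ₀ : ℝ → ℝ) (a b : ℝ) (y v : ℝ) : ℝ :=
  (b * (Υ₀ y * (1 - y) - v) + Γ₀ y * (2 - (6 + a) * (1 - y))) * v

/-- The Dulac function φ(y,v) = 1/(y^{1+b} v). -/
noncomputable def dulacPhi (b y v : ℝ) : ℝ := 1 / (y ^ (1 + b) * v)

lemma dulac_key (Υ₀ Γ₀ : ℝ → ℝ) (a b : ℝ) (hb : 0 < b)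
    (hΥ : ContDiff ℝ 1 Υ₀) :
    ∀ y ∈ Set.Ioo (0 : ℝ) 1, ∀ v ∈ Set.Ioi (0 : ℝ),
      deriv (fun t => dulacPhi b t v * planarF1 Υ₀ t v) y
        + deriv (fun w => dulacPhi b y w * planarF2 Υ₀ Γ₀ a b y w) v
      = -dulacPhi b y v *
          ((b * Υ₀ y - y * deriv Υ₀ y) * (1 - y) + y * Υ₀ y) := by
  intro y hy v hv
  obtain ⟨hy0, hy1⟩ := hy
  have hv0 : (0:ℝ) < v := hv
  have hA : (0:ℝ) < y ^ (1 + b) := Real.rpow_pos_of_pos hy0 _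
  -- first derivative
  have heq1 : (fun t => dulacPhi b t v * planarF1 Υ₀ t v)
      =ᶠ[nhds y] fun t => (Υ₀ t * (1 - t) - v) * t ^ (-b) / v := by
    filter_upwards [isOpen_Ioi.eventually_mem (Set.mem_Ioi.2 hy0)] with t ht
    have ht0 : (0:ℝ) < t := ht
    have htb : (0:ℝ) < t ^ b := Real.rpow_pos_of_pos ht0 _
    have h1 : t ^ (1 + b) = t * t ^ b := by
      rw [Real.rpow_add ht0, Real.rpow_one]
    have h2 : t ^ (-b) = (t ^ b)⁻¹ := Real.rpow_neg ht0.le _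
    simp only [dulacPhi, planarF1, h1, h2]
    field_simp
  have hd1 : HasDerivAt (fun t => (Υ₀ t * (1 - t) - v) * t ^ (-b) / v)
      (((deriv Υ₀ y * (1 - y) + Υ₀ y * (0 - 1) - 0) * y ^ (-b)
        + (Υ₀ y * (1 - y) - v) * (-b * y ^ (-b - 1))) / v) y := by
    simpa using ((((hΥ.differentiable one_ne_zero y).hasDerivAt.mul
        ((hasDerivAt_const y (1:ℝ)).sub (hasDerivAt_id y))).sub_const v).mul
        (Real.hasDerivAt_rpow_const (p := -b) (Or.inl hy0.ne'))).div_const v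
  have e1 : deriv (fun t => dulacPhi b t v * planarF1 Υ₀ t v) y
      = ((deriv Υ₀ y * (1 - y) + Υ₀ y * (0 - 1) - 0) * y ^ (-b)
        + (Υ₀ y * (1 - y) - v) * (-b * y ^ (-b - 1))) / v := by
    rw [heq1.deriv_eq, hd1.deriv]
  -- second derivative
  have heq2 : (fun w => dulacPhi b y w * planarF2 Υ₀ Γ₀ a b y w)
      =ᶠ[nhds v] fun w =>
        (b * (Υ₀ y * (1 - y)) + Γ₀ y * (2 - (6 + a) * (1 - y)) - b * w)
          / y ^ (1 + b) := by
    filter_upwards [isOpen_Ioi.eventually_mem (Set.mem_Ioi.2 hv0)] with w hw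
    have hw0 : (0:ℝ) < w := hw
    simp only [dulacPhi, planarF2]
    field_simp
    ring
  have hd2 : HasDerivAt (fun w =>
        (b * (Υ₀ y * (1 - y)) + Γ₀ y * (2 - (6 + a) * (1 - y)) - b * w)
          / y ^ (1 + b)) ((0 - b * 1) / y ^ (1 + b)) v := by
    exact ((hasDerivAt_const v _).sub ((hasDerivAt_id v).const_mul b)).div_const _
  have e2 : deriv (fun w => dulacPhi b y w * planarF2 Υ₀ Γ₀ a b y w) v
      = (0 - b * 1) / y ^ (1 + b) := by
    rw [heq2.deriv_eq, hd2.deriv]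
  rw [e1, e2]
  -- algebra
  have k1 : y ^ (-b) = y / y ^ (1 + b) := by
    rw [eq_div_iff hA.ne', ← Real.rpow_add hy0, ← Real.rpow_one y]
    norm_num
  have k2 : y ^ (-b - 1) = 1 / y ^ (1 + b) := by
    rw [eq_div_iff hA.ne', ← Real.rpow_add hy0,
      show -b - 1 + (1 + b) = 0 by ring, Real.rpow_zero]
  rw [k1, k2, dulacPhi]
  field_simp
  ring

/-- Divergence computation for the Dulac function φ = 1/(y^{1+b} v). -/
theorem dulac_divergence (Υ₀ Γ₀ : ℝ → ℝ) (a b : ℝ) (hb : 0 < b)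
    (hΥ : ContDiff ℝ 1 Υ₀) (hΓ : ContDiff ℝ 1 Γ₀) :
    (∀ y ∈ Set.Ioo (0 : ℝ) 1, ∀ v ∈ Set.Ioi (0 : ℝ),
      deriv (fun t => dulacPhi b t v * planarF1 Υ₀ t v) y
        + deriv (fun w => dulacPhi b y w * planarF2 Υ₀ Γ₀ a b y w) v
      = -dulacPhi b y v *
          ((b * Υ₀ y - y * deriv Υ₀ y) * (1 - y) + y * Υ₀ y)) ∧
    ((∀ y ∈ Set.Ioo (0 : ℝ) 1,
        0 < (b * Υ₀ y - y * deriv Υ₀ y) * (1 - y) + y * Υ₀ y) →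
      ∀ y ∈ Set.Ioo (0 : ℝ) 1, ∀ v ∈ Set.Ioi (0 : ℝ),
        deriv (fun t => dulacPhi b t v * planarF1 Υ₀ t v) y
          + deriv (fun w => dulacPhi b y w * planarF2 Υ₀ Γ₀ a b y w) v < 0) := by
  constructor
  · exact dulac_key Υ₀ Γ₀ a b hb hΥ
  · intro h y hy v hv
    rw [dulac_key Υ₀ Γ₀ a b hb hΥ y hy v hv]
    have hφ : 0 < dulacPhi b y v :=
      div_pos one_pos (mul_pos (Real.rpow_pos_of_pos hy.1 _) hv)
    have := h y hy
    nlinarith [mul_pos hφ this]
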